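/- Let R be an F-pure Noetherian ring of characteristic p, I₁,…,I_t ideals, J an ideal with I₁,…,I_t ⊆ √J, and I = I₁ + ⋯ + I_t. Then c^J(I) = sup { θ₁ + ⋯ + θ_t : θ ∈ B^J(I₁,…,I_t) }, where B^J(I₁,…,I_t) = ⋃_e ⋃_{a ∈ V(p^e)} ∏_i [0, a_i/p^e]. -/

import Mathlib

open Ideal Filter MeasureTheory

/-- The `q`-th Frobenius power of an ideal: the ideal generated by `q`-th powers of its
elements (used with `q = p ^ e`). -/
def Ideal.frobPow {R : Type*} [CommRing R] (J : Ideal R) (q : ℕ) : Ideal R :=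
  Ideal.span ((fun a => a ^ q) '' (J : Set R))

/-- The set `V` of exponent vectors `a ∈ ℕ^t` with `I₁^{a₁} ⋯ I_t^{a_t} ⊄ J'`. -/
def Vnu {R : Type*} [CommRing R] {t : ℕ} (I : Fin t → Ideal R) (J' : Ideal R) :
    Set (Fin t → ℕ) :=
  {a | ¬ (∏ i, I i ^ a i) ≤ J'}

universe u v

/-- A ring homomorphism `f : R → S` is pure if for every `R`-module `M`, the natural map
`M → M ⊗_R S` (with `S` viewed as an `R`-module via `f`) is injective. -/
def RingHom.IsPureHom {R : Type u} {S : Type v} [CommRing R] [CommRing S]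
    (f : R →+* S) : Prop :=
  ∀ (M : Type (max u v)) [AddCommGroup M] [Module R M],
    letI : Module R S := Module.compHom S f
    Function.Injective (fun m : M => (TensorProduct.tmul R m (1 : S) : TensorProduct R M S))

/-- `R` is F-pure if the Frobenius endomorphism is a pure ring homomorphism. -/
def IsFPure (p : ℕ) (R : Type u) [CommRing R] [Fact p.Prime] [CharP R p] : Prop :=
  RingHom.IsPureHom (frobenius R p)

/-- The region `B^{J'}(I; q) = ⋃_{a ∈ V} ∏ᵢ [0, aᵢ/q] ⊆ ℝ^t`. -/
def Breg {R : Type*} [CommRing R] {t : ℕ} (I : Fin t → Ideal R) (J' : Ideal R) (q : ℕ) :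
    Set (Fin t → ℝ) :=
  ⋃ a ∈ Vnu I J', Set.univ.pi fun i => Set.Icc (0 : ℝ) ((a i : ℝ) / (q : ℝ))

/-- `ν_I^{J'} = max {n : I^n ⊄ J'}`. -/
noncomputable def nuF {R : Type*} [CommRing R] (I J' : Ideal R) : ℕ :=
  sSup {n : ℕ | ¬ I ^ n ≤ J'}

/- ### Auxiliary lemmas -/

/-- Purity: if `f` is pure and `f x` lies in the extension of `K`, then `x ∈ K`. -/
lemma RingHom.IsPureHom.mem_of_map_mem {R S : Type u} [CommRing R] [CommRing S]
    {f : R →+* S} (hf : f.IsPureHom) (K : Ideal R) {x : R}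
    (hx : f x ∈ Ideal.span (⇑f '' (K : Set R))) : x ∈ K := by
  letI : Module R S := Module.compHom S f
  have smul_def : ∀ (r : R) (s : S), r • s = f r * s := fun _ _ => rfl
  have hmul : ∀ (s y : S), y ∈ (K • (⊤ : Submodule R S)) → s * y ∈ K • (⊤ : Submodule R S) := by
    intro s y hy
    refine Submodule.smul_induction_on hy ?_ ?_
    · intro a ha z _
      have h1 : s * (a • z) = a • (s * z) := by rw [smul_def, smul_def]; ring
      rw [h1]
      exact Submodule.smul_mem_smul ha trivial
    · intro y z hy hz
      rw [mul_add]; exact add_mem hy hz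
  have hmem : f x ∈ (K • (⊤ : Submodule R S)) := by
    refine Submodule.span_induction ?_ ?_ ?_ ?_ hx
    · rintro y ⟨a, ha, rfl⟩
      have h1 : f a = a • (1 : S) := by rw [smul_def, mul_one]
      rw [h1]
      exact Submodule.smul_mem_smul ha trivial
    · exact Submodule.zero_mem _
    · intro y z _ _ hy hz; exact Submodule.add_mem _ hy hz
    · intro r y _ hy
      rw [smul_eq_mul]; exact hmul r y hy
  have hinj := hf (R ⧸ K)
  have he : (TensorProduct.quotTensorEquivQuotSMul S K)
      ((Ideal.Quotient.mk K x) ⊗ₜ[R] (1 : S)) = 0 := by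
    rw [TensorProduct.quotTensorEquivQuotSMul_mk_tmul, Submodule.Quotient.mk_eq_zero,
      smul_def, mul_one]
    exact hmem
  have h0 : (Ideal.Quotient.mk K x) ⊗ₜ[R] (1 : S) = (0 : R ⧸ K) ⊗ₜ[R] (1 : S) := by
    rw [TensorProduct.zero_tmul]
    exact ((TensorProduct.quotTensorEquivQuotSMul S K).map_eq_zero_iff).mp he
  have := hinj h0
  rwa [← Ideal.Quotient.eq_zero_iff_mem]

/-- In an F-pure ring, `x^p ∈ K^{[p]}` implies `x ∈ K`. -/
lemma frob_descend {R : Type u} [CommRing R] (p : ℕ) [Fact p.Prime] [CharP R p]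
    (hFP : IsFPure p R) (K : Ideal R) {x : R} (hx : x ^ p ∈ K.frobPow p) : x ∈ K := by
  refine hFP.mem_of_map_mem K ?_
  have h1 : ⇑(frobenius R p) '' (K : Set R) = (fun a => a ^ p) '' (K : Set R) := by
    apply Set.image_congr; intro a _; rfl
  rw [h1]
  show x ^ p ∈ _
  exact hx

lemma frobPow_mul_le {R : Type*} [CommRing R] (J : Ideal R) (q1 q2 : ℕ) :
    J.frobPow (q1 * q2) ≤ (J.frobPow q1).frobPow q2 := by
  rw [Ideal.frobPow, Ideal.span_le]
  rintro y ⟨a, ha, rfl⟩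
  show a ^ (q1 * q2) ∈ _
  rw [pow_mul]
  exact Ideal.subset_span ⟨a ^ q1, Ideal.subset_span ⟨a, ha, rfl⟩, rfl⟩

lemma ideal_sum_le {R : Type*} [CommRing R] {t : ℕ} (f : Fin t → Ideal R) (J' : Ideal R)
    (h : ∀ i, f i ≤ J') : (∑ i, f i) ≤ J' := by
  refine Finset.sum_induction f (· ≤ J') ?_ bot_le (fun i _ => h i)
  intro a b ha hb
  rw [Submodule.add_eq_sup]; exact sup_le ha hb

lemma le_ideal_sum {R : Type*} [CommRing R] {t : ℕ} (f : Fin t → Ideal R) (i : Fin t) :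
    f i ≤ ∑ j, f j :=
  Finset.single_le_sum (fun _ _ => bot_le) (Finset.mem_univ i)

lemma prod_pow_le_pow_sum {R : Type*} [CommRing R] {t : ℕ} (I : Fin t → Ideal R)
    (T : Ideal R) (hT : ∀ i, I i ≤ T) (a : Fin t → ℕ) :
    (∏ i, I i ^ a i) ≤ T ^ (∑ i, a i) := by
  classical
  induction (Finset.univ : Finset (Fin t)) using Finset.induction with
  | empty => simp
  | insert _ _ hne ih =>
    rw [Finset.prod_insert hne, Finset.sum_insert hne, pow_add]
    exact Ideal.mul_mono (Ideal.pow_right_mono (hT _) _) ih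

lemma sum_pow_le {R : Type*} [CommRing R] {t : ℕ} (I : Fin t → Ideal R) :
    ∀ (n : ℕ) (J' : Ideal R),
      (∀ a : Fin t → ℕ, (∑ i, a i) = n → (∏ i, I i ^ a i) ≤ J') → (∑ i, I i) ^ n ≤ J' := by
  intro n
  induction n with
  | zero =>
    intro J' h
    have h0 := h 0 (by simp)
    simp only [Pi.zero_apply, pow_zero, Finset.prod_const_one] at h0
    simpa [pow_zero] using h0
  | succ n ih =>
    intro J' h
    rw [pow_succ, Finset.mul_sum]
    refine ideal_sum_le _ _ fun i => ?_
    have hcol : (∑ j, I j) ^ n ≤ Submodule.colon J' (I i) := by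
      refine ih _ fun a ha => ?_
      intro x hx
      rw [Submodule.mem_colon]
      intro y hy
      have key : (∏ j, I j ^ a j) * I i ≤ J' := by
        set a' : Fin t → ℕ := a + Pi.single i 1 with ha'
        have hsum : (∑ j, a' j) = n + 1 := by
          rw [ha']
          simp only [Pi.add_apply]
          rw [Finset.sum_add_distrib, ha, Finset.sum_pi_single']
          simp
        have hprod : (∏ j, I j ^ a' j) = (∏ j, I j ^ a j) * I i := by
          rw [ha']
          simp only [Pi.add_apply, pow_add]
          rw [Finset.prod_mul_distrib]
          congr 1
          rw [Finset.prod_eq_single i (fun j _ hj => by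
            rw [Pi.single_eq_of_ne hj, pow_zero]) (by simp)]
          rw [Pi.single_eq_same, pow_one]
        have := h a' hsum
        rwa [hprod] at this
      rw [smul_eq_mul]
      exact Ideal.mul_le.mp key x hx y hy
    refine le_trans (Ideal.mul_mono hcol le_rfl) ?_
    rw [Ideal.mul_le]
    intro r hr s hs
    rw [Submodule.mem_colon] at hr
    simpa [smul_eq_mul] using hr s hs

lemma exists_vec_of_pow_not_le {R : Type*} [CommRing R] {t : ℕ} (I : Fin t → Ideal R)
    {n : ℕ} {J' : Ideal R} (h : ¬ (∑ i, I i) ^ n ≤ J') :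
    ∃ a : Fin t → ℕ, (∑ i, a i) = n ∧ ¬ (∏ i, I i ^ a i) ≤ J' := by
  by_contra hcon
  push_neg at hcon
  exact h (sum_pow_le I n J' hcon)

/-- For `R` F-pure, `c^J(I₁ + ⋯ + I_t) = sup {θ₁ + ⋯ + θ_t : θ ∈ B^J(I₁,…,I_t)}`. -/
theorem stmt14 {R : Type u} [CommRing R] [IsNoetherianRing R] (p : ℕ) [Fact p.Prime]
    [CharP R p] (hFP : IsFPure p R) {t : ℕ} (I : Fin t → Ideal R) (J : Ideal R)
    (hrad : ∀ i, I i ≤ J.radical) (c : ℝ)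
    (hc : Tendsto (fun e : ℕ => (nuF (∑ i, I i) (J.frobPow (p ^ e)) : ℝ) / (p : ℝ) ^ e)
      atTop (nhds c)) :
    c = sSup ((fun θ : Fin t → ℝ => ∑ i, θ i) ''
      (⋃ e : ℕ, Breg I (J.frobPow (p ^ e)) (p ^ e))) := by
  classical
  have hp : p.Prime := Fact.out
  have hppos : 0 < p := hp.pos
  set Is : Ideal R := ∑ i, I i with hIsdef
  by_cases hJtop : J = ⊤
  · -- degenerate case `J = ⊤`
    have hfr : ∀ e : ℕ, J.frobPow (p ^ e) = ⊤ := by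
      intro e
      rw [Ideal.eq_top_iff_one]
      exact Ideal.subset_span ⟨1, by simp [hJtop], one_pow _⟩
    have hnu : ∀ e : ℕ, nuF Is (J.frobPow (p ^ e)) = 0 := by
      intro e
      have hempty : {n : ℕ | ¬ Is ^ n ≤ J.frobPow (p ^ e)} = ∅ := by
        ext n; simp [hfr e]
      rw [nuF, hempty, csSup_empty]
      rfl
    have hc0 : c = 0 := by
      have h1 : Tendsto (fun _ : ℕ => (0 : ℝ)) atTop (nhds c) := by
        have h2 := hc
        simp only [← hIsdef, hnu, Nat.cast_zero, zero_div] at h2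
        exact h2
      exact tendsto_nhds_unique h1 tendsto_const_nhds
    have hB : (⋃ e : ℕ, Breg I (J.frobPow (p ^ e)) (p ^ e)) = ∅ := by
      simp [Breg, Vnu, hfr]
    rw [hB, hc0]
    simp [Real.sSup_empty]
  · -- main case `J ≠ ⊤`
    have hfne : ∀ e : ℕ, J.frobPow (p ^ e) ≠ ⊤ := by
      intro e htop
      apply hJtop
      rw [Ideal.eq_top_iff_one] at htop ⊢
      have hle : J.frobPow (p ^ e) ≤ J := by
        rw [Ideal.frobPow, Ideal.span_le]
        rintro y ⟨a, ha, rfl⟩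
        obtain ⟨m, hm⟩ : ∃ m, p ^ e = m + 1 :=
          ⟨p ^ e - 1, by have := Nat.one_le_pow e p hppos; omega⟩
        show a ^ (p ^ e) ∈ J
        rw [hm, pow_succ]
        exact Ideal.mul_mem_left _ _ ha
      exact hle htop
    set Nset : ℕ → Set ℕ := fun e => {n : ℕ | ¬ Is ^ n ≤ J.frobPow (p ^ e)} with hNsetdef
    have hne : ∀ e, (Nset e).Nonempty := by
      intro e
      refine ⟨0, ?_⟩
      show ¬ Is ^ 0 ≤ J.frobPow (p ^ e)
      rw [pow_zero, Ideal.one_eq_top, top_le_iff]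
      exact hfne e
    have hbdd : ∀ e, BddAbove (Nset e) := by
      intro e
      have hIsrad : Is ≤ (J.frobPow (p ^ e)).radical := by
        have h1 : J ≤ (J.frobPow (p ^ e)).radical := by
          intro a ha
          rw [Ideal.mem_radical_iff]
          exact ⟨p ^ e, Ideal.subset_span ⟨a, ha, rfl⟩⟩
        have h2 : J.radical ≤ (J.frobPow (p ^ e)).radical :=
          le_trans (Ideal.radical_mono h1) (Ideal.radical_idem _).le
        exact le_trans (ideal_sum_le I _ hrad) h2
      obtain ⟨k, hk⟩ :=
        Ideal.exists_pow_le_of_le_radical_of_fg hIsrad (IsNoetherian.noetherian Is)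
      refine ⟨k, fun n hn => ?_⟩
      by_contra hlt
      push_neg at hlt
      exact hn (le_trans (Ideal.pow_le_pow_right hlt.le) hk)
    set N : ℕ → ℕ := fun e => nuF Is (J.frobPow (p ^ e)) with hNdef
    have hNmem : ∀ e, N e ∈ Nset e := fun e => Nat.sSup_mem (hne e) (hbdd e)
    -- monotonicity step via F-purity
    have hstep : ∀ e, p * N e ∈ Nset (e + 1) := by
      intro e
      show ¬ Is ^ (p * N e) ≤ J.frobPow (p ^ (e + 1))
      intro hle
      refine hNmem e ?_
      show Is ^ N e ≤ J.frobPow (p ^ e)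
      intro x hx
      refine frob_descend p hFP _ ?_
      have h1 : x ^ p ∈ Is ^ (p * N e) := by
        have h2 := Ideal.pow_mem_pow hx p
        rwa [← pow_mul, mul_comm] at h2
      have h3 : Is ^ (p * N e) ≤ (J.frobPow (p ^ e)).frobPow p := by
        refine le_trans hle ?_
        rw [pow_succ]
        exact frobPow_mul_le J (p ^ e) p
      exact h3 h1
    set f : ℕ → ℝ := fun e => (N e : ℝ) / (p : ℝ) ^ e with hfdef
    have hmono : Monotone f := by
      refine monotone_nat_of_le_succ fun e => ?_
      have h1 : p * N e ≤ N (e + 1) := le_csSup (hbdd (e + 1)) (hstep e)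
      have h1' : (p : ℝ) * (N e : ℝ) ≤ (N (e + 1) : ℝ) := by exact_mod_cast h1
      have hpe : (0 : ℝ) < (p : ℝ) ^ e := by positivity
      have hpe1 : (0 : ℝ) < (p : ℝ) ^ (e + 1) := by positivity
      show (N e : ℝ) / (p : ℝ) ^ e ≤ (N (e + 1) : ℝ) / (p : ℝ) ^ (e + 1)
      rw [div_le_div_iff₀ hpe hpe1]
      calc (N e : ℝ) * (p : ℝ) ^ (e + 1) = ((p : ℝ) * (N e : ℝ)) * (p : ℝ) ^ e := by ring
        _ ≤ (N (e + 1) : ℝ) * (p : ℝ) ^ e := by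
            exact mul_le_mul_of_nonneg_right h1' hpe.le
    have hfc : ∀ e, f e ≤ c := fun e => hmono.ge_of_tendsto hc e
    set S : Set ℝ := (fun θ : Fin t → ℝ => ∑ i, θ i) ''
      (⋃ e : ℕ, Breg I (J.frobPow (p ^ e)) (p ^ e)) with hSdef
    -- each f e is attained in S
    have hfeS : ∀ e, f e ∈ S := by
      intro e
      obtain ⟨a, hsum, haV⟩ := exists_vec_of_pow_not_le I (hNmem e)
      refine ⟨fun i => (a i : ℝ) / ((p ^ e : ℕ) : ℝ), ?_, ?_⟩
      · refine Set.mem_iUnion.mpr ⟨e, ?_⟩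
        refine Set.mem_iUnion₂.mpr ⟨a, haV, ?_⟩
        intro i _
        have : (0 : ℝ) ≤ (a i : ℝ) / ((p ^ e : ℕ) : ℝ) := by positivity
        exact ⟨this, le_refl _⟩
      · show (∑ i, (a i : ℝ) / ((p ^ e : ℕ) : ℝ)) = f e
        rw [← Finset.sum_div]
        show (∑ i, (a i : ℝ)) / ((p ^ e : ℕ) : ℝ) = (N e : ℝ) / (p : ℝ) ^ e
        rw [← Nat.cast_sum, hsum]
        push_cast
        ring
    -- c is an upper bound of S
    have hub : ∀ x ∈ S, x ≤ c := by
      rintro x ⟨θ, hθ, rfl⟩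
      obtain ⟨e, hθe⟩ := Set.mem_iUnion.mp hθ
      obtain ⟨a, haV, hbox⟩ := Set.mem_iUnion₂.mp hθe
      have h1 : ∀ i, θ i ≤ (a i : ℝ) / ((p ^ e : ℕ) : ℝ) := fun i =>
        (hbox i (Set.mem_univ i)).2
      have h2 : (∑ i, a i) ∈ Nset e := by
        show ¬ Is ^ (∑ i, a i) ≤ J.frobPow (p ^ e)
        intro hle
        exact haV (le_trans (prod_pow_le_pow_sum I Is (fun i => le_ideal_sum I i) a) hle)
      have h3 : (∑ i, a i) ≤ N e := le_csSup (hbdd e) h2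
      have h3' : ((∑ i, a i : ℕ) : ℝ) ≤ (N e : ℝ) := by exact_mod_cast h3
      have hpe : (0 : ℝ) < ((p ^ e : ℕ) : ℝ) := by positivity
      calc ∑ i, θ i ≤ ∑ i, (a i : ℝ) / ((p ^ e : ℕ) : ℝ) :=
            Finset.sum_le_sum fun i _ => h1 i
        _ = ((∑ i, a i : ℕ) : ℝ) / ((p ^ e : ℕ) : ℝ) := by
            rw [← Finset.sum_div, Nat.cast_sum]
        _ ≤ (N e : ℝ) / ((p ^ e : ℕ) : ℝ) := by
            gcongr
        _ = f e := by push_cast; ring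
        _ ≤ c := hfc e
    have hSne : S.Nonempty := ⟨f 0, hfeS 0⟩
    have hSbdd : BddAbove S := ⟨c, hub⟩
    refine le_antisymm ?_ (csSup_le hSne hub)
    exact le_of_tendsto hc (Filter.Eventually.of_forall fun e => le_csSup hSbdd (hfeS e))
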